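/- Fix ℓ > 0, q > 1, and α with 1 < α < 2, and write n = ⌊m + ℓ m^q⌋. Then the Slicer Map auto-correlation φ(n, m) is asymptotic to (2α/((2−α)(α−1))) m^(2−α) as m → ∞. -/

import Mathlib

open Filter Topology

/-- ℓ⁺_m(α) = 1 - (m + 2^(1/α))^(-α) -/
noncomputable def ellp (α : ℝ) (m : ℕ) : ℝ := 1 - ((m : ℝ) + (2 : ℝ) ^ (1/α)) ^ (-α)

/-- Δ_k(α) = ℓ⁺_k(α) - ℓ⁺_{k-1}(α) -/
noncomputable def Dlt (α : ℝ) (k : ℕ) : ℝ := ellp α k - ellp α (k - 1)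

/-- Position-position auto-correlation of the Slicer Map, for times m ≤ n. -/
noncomputable def phi (α : ℝ) (n m : ℕ) : ℝ :=
  2 * ∑ k ∈ Finset.Icc 1 m, (k : ℝ) ^ 2 * Dlt α k
    + 2 * m * ∑ k ∈ Finset.Icc (m + 1) n, (k : ℝ) * Dlt α k
    + 2 * m * n * ∑' k : ℕ, Dlt α (n + 1 + k)

open Finset Set

-- MVT step
lemma mvt_rpow (p x : ℝ) (hx : 0 < x) :
    ∃ ξ, x < ξ ∧ ξ < x + 1 ∧ (x+1)^p - x^p = p * ξ^(p-1) := by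
  have h : ∀ y ∈ Set.Ioo x (x+1), HasDerivAt (fun z : ℝ => z ^ p) (p * y ^ (p-1)) y := by
    intro y hy
    have hy0 : y ≠ 0 := ne_of_gt (hx.trans hy.1)
    simpa [mul_comm] using (Real.hasDerivAt_rpow_const (Or.inl hy0))
  have hc : ContinuousOn (fun z : ℝ => z ^ p) (Set.Icc x (x+1)) := by
    intro y hy
    exact (Real.continuousAt_rpow_const y p (Or.inl (ne_of_gt (lt_of_lt_of_le hx hy.1)))).continuousWithinAt
  obtain ⟨ξ, hξ, heq⟩ := exists_hasDerivAt_eq_slope (fun z : ℝ => z ^ p)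
    (fun y => p * y ^ (p-1)) (by linarith) hc h
  exact ⟨ξ, hξ.1, hξ.2, by rw [heq]; field_simp; ring⟩

variable {α : ℝ}

lemma rpow_anti {x y p : ℝ} (hx : 0 < x) (hxy : x ≤ y) (hp : p ≤ 0) : y ^ p ≤ x ^ p :=
  Real.rpow_le_rpow_of_nonpos hx hxy hp

lemma stepP (hα : 1 < α) (hα2 : α < 2) {x : ℝ} (hx : 0 < x) :
    (2-α) * (x+1)^(1-α) ≤ (x+1)^(2-α) - x^(2-α) ∧
      (x+1)^(2-α) - x^(2-α) ≤ (2-α) * x^(1-α) := by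
  obtain ⟨ξ, h1, h2, heq⟩ := mvt_rpow (2-α) x hx
  have hξ : 0 < ξ := hx.trans h1
  have e : (2-α) - 1 = 1 - α := by ring
  rw [heq, e]
  constructor
  · exact mul_le_mul_of_nonneg_left (rpow_anti hξ h2.le (by linarith)) (by linarith)
  · exact mul_le_mul_of_nonneg_left (rpow_anti hx h1.le (by linarith)) (by linarith)

lemma stepQ (hα : 1 < α) {x : ℝ} (hx : 0 < x) :
    (α-1) * (x+1)^(-α) ≤ x^(1-α) - (x+1)^(1-α) ∧
      x^(1-α) - (x+1)^(1-α) ≤ (α-1) * x^(-α) := by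
  obtain ⟨ξ, h1, h2, heq⟩ := mvt_rpow (1-α) x hx
  have hξ : 0 < ξ := hx.trans h1
  have e : (1-α) - 1 = -α := by ring
  rw [e] at heq
  have heq' : x^(1-α) - (x+1)^(1-α) = (α-1) * ξ^(-α) := by
    have := heq; nlinarith [this]
  rw [heq']
  constructor
  · exact mul_le_mul_of_nonneg_left (rpow_anti hξ h2.le (by linarith)) (by linarith)
  · exact mul_le_mul_of_nonneg_left (rpow_anti hx h1.le (by linarith)) (by linarith)

lemma sumP (hα : 1 < α) (hα2 : α < 2) (N : ℕ) {t : ℝ} (ht : 0 < t) :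
    (2-α) * ∑ i ∈ range N, ((i:ℝ)+1+t)^(1-α) ≤ ((N:ℝ)+t)^(2-α) - t^(2-α) ∧
      ((N:ℝ)+t)^(2-α) - t^(2-α) ≤ (2-α) * ∑ i ∈ range N, ((i:ℝ)+t)^(1-α) := by
  set f : ℕ → ℝ := fun i => ((i:ℝ)+t)^(2-α) with hf
  have tel : ∑ i ∈ range N, (f (i+1) - f i) = ((N:ℝ)+t)^(2-α) - t^(2-α) := by
    rw [Finset.sum_range_sub f N]; simp [hf]
  have hfe : ∀ i : ℕ, f (i+1) - f i = (((i:ℝ)+t)+1)^(2-α) - ((i:ℝ)+t)^(2-α) := by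
    intro i; simp only [hf]; push_cast; ring_nf
  constructor
  · rw [Finset.mul_sum, ← tel]
    refine Finset.sum_le_sum fun i _ => ?_
    rw [hfe i]
    have := (stepP hα hα2 (x := (i:ℝ)+t) (by positivity)).1
    calc (2-α) * ((i:ℝ)+1+t)^(1-α) = (2-α) * (((i:ℝ)+t)+1)^(1-α) := by ring_nf
    _ ≤ _ := this
  · rw [Finset.mul_sum, ← tel]
    refine Finset.sum_le_sum fun i _ => ?_
    rw [hfe i]
    exact (stepP hα hα2 (x := (i:ℝ)+t) (by positivity)).2

lemma sumQ (hα : 1 < α) (N : ℕ) {t : ℝ} (ht : 0 < t) :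
    (α-1) * ∑ i ∈ range N, ((i:ℝ)+1+t)^(-α) ≤ t^(1-α) - ((N:ℝ)+t)^(1-α) ∧
      t^(1-α) - ((N:ℝ)+t)^(1-α) ≤ (α-1) * ∑ i ∈ range N, ((i:ℝ)+t)^(-α) := by
  set f : ℕ → ℝ := fun i => ((i:ℝ)+t)^(1-α) with hf
  have tel : ∑ i ∈ range N, (f i - f (i+1)) = t^(1-α) - ((N:ℝ)+t)^(1-α) := by
    rw [Finset.sum_range_sub' f N]; simp [hf]
  have hfe : ∀ i : ℕ, f i - f (i+1) = ((i:ℝ)+t)^(1-α) - (((i:ℝ)+t)+1)^(1-α) := by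
    intro i; simp only [hf]; push_cast; ring_nf
  constructor
  · rw [Finset.mul_sum, ← tel]
    refine Finset.sum_le_sum fun i _ => ?_
    rw [hfe i]
    have := (stepQ hα (x := (i:ℝ)+t) (by positivity)).1
    calc (α-1) * ((i:ℝ)+1+t)^(-α) = (α-1) * (((i:ℝ)+t)+1)^(-α) := by ring_nf
    _ ≤ _ := this
  · rw [Finset.mul_sum, ← tel]
    refine Finset.sum_le_sum fun i _ => ?_
    rw [hfe i]
    exact (stepQ hα (x := (i:ℝ)+t) (by positivity)).2


noncomputable def aa (α : ℝ) (j : ℕ) : ℝ := ((j:ℝ) + (2:ℝ)^(1/α))^(-α)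

lemma c_pos : (0:ℝ) < (2:ℝ)^(1/α) := Real.rpow_pos_of_pos two_pos _

lemma aa_nonneg (j : ℕ) : 0 ≤ aa α j :=
  Real.rpow_nonneg (le_of_lt (by have := c_pos (α := α); positivity)) _

lemma aa_pos_base (j : ℕ) : (0:ℝ) < (j:ℝ) + (2:ℝ)^(1/α) := by
  have := c_pos (α := α); positivity

lemma Dlt_succ (i : ℕ) : Dlt α (i+1) = aa α i - aa α (i+1) := by
  simp only [Dlt, ellp, aa, Nat.add_sub_cancel]
  push_cast; ring

lemma aa_antitone {i j : ℕ} (hα : 0 < α) (h : i ≤ j) : aa α j ≤ aa α i :=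
  rpow_anti (aa_pos_base i) (by have : (i:ℝ) ≤ (j:ℝ) := Nat.cast_le.2 h; linarith) (by linarith)

lemma aa_tendsto (hα : 0 < α) : Tendsto (fun j : ℕ => aa α j) atTop (𝓝 0) := by
  have h1 : Tendsto (fun j : ℕ => (j:ℝ) + (2:ℝ)^(1/α)) atTop atTop :=
    tendsto_atTop_add_const_right _ _ tendsto_natCast_atTop_atTop
  exact (tendsto_rpow_neg_atTop hα).comp h1

lemma tsum_tail (hα : 0 < α) (n : ℕ) : ∑' k : ℕ, Dlt α (n + 1 + k) = aa α n := by
  have hterm : ∀ k : ℕ, Dlt α (n + 1 + k) = aa α (n + k) - aa α (n + k + 1) := by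
    intro k
    have : n + 1 + k = (n + k) + 1 := by ring
    rw [this, Dlt_succ]
  have hs : HasSum (fun k : ℕ => Dlt α (n + 1 + k)) (aa α n) := by
    rw [hasSum_iff_tendsto_nat_of_nonneg]
    · have : ∀ N : ℕ, ∑ i ∈ range N, Dlt α (n + 1 + i) = aa α n - aa α (n + N) := by
        intro N
        calc ∑ i ∈ range N, Dlt α (n + 1 + i)
            = ∑ i ∈ range N, ((fun j => aa α (n + j)) i - (fun j => aa α (n + j)) (i+1)) := by
              refine Finset.sum_congr rfl fun i _ => ?_
              rw [hterm i]; ring_nf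
        _ = aa α n - aa α (n + N) := by rw [Finset.sum_range_sub']; norm_num
      simp only [this]
      have h2 : Tendsto (fun N : ℕ => aa α (n + N)) atTop (𝓝 0) := by
        have := (aa_tendsto (α := α) hα).comp (tendsto_add_atTop_nat n)
        simpa [Function.comp_def, Nat.add_comm] using this
      simpa using (tendsto_const_nhds (x := aa α n)).sub h2
    · intro i
      rw [hterm i]
      have := aa_antitone (α := α) hα (Nat.le_succ (n + i))
      linarith
  exact hs.tsum_eq

lemma S1 (m : ℕ) :
    ∑ i ∈ range m, ((i:ℝ)+1)^2 * (aa α i - aa α (i+1))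
      = (∑ i ∈ range m, (2*(i:ℝ)+1) * aa α i) - (m:ℝ)^2 * aa α m := by
  induction m with
  | zero => simp
  | succ m ih =>
    rw [Finset.sum_range_succ, ih, Finset.sum_range_succ]
    push_cast; ring

lemma S2 (m N : ℕ) :
    ∑ i ∈ range N, ((m:ℝ)+(i:ℝ)+1) * (aa α (m+i) - aa α (m+i+1))
      = (m:ℝ) * aa α m - ((m:ℝ)+(N:ℝ)) * aa α (m+N) + ∑ i ∈ range N, aa α (m+i) := by
  induction N with
  | zero => simp
  | succ N ih =>
    rw [Finset.sum_range_succ, ih, Finset.sum_range_succ]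
    push_cast [Nat.add_succ]; ring

lemma phi_eq (hα : 0 < α) {m n : ℕ} (hmn : m ≤ n) :
    phi α n m = 2 * ∑ i ∈ range m, (2*(i:ℝ)+1) * aa α i
      + 2 * (m:ℝ) * ∑ i ∈ range (n-m), aa α (m+i) := by
  have h1 : ∑ k ∈ Finset.Icc 1 m, (k : ℝ) ^ 2 * Dlt α k
      = ∑ i ∈ range m, ((i:ℝ)+1)^2 * (aa α i - aa α (i+1)) := by
    rw [← Finset.Ico_add_one_right_eq_Icc, Finset.sum_Ico_eq_sum_range,
      show m + 1 - 1 = m from rfl]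
    refine Finset.sum_congr rfl fun i _ => ?_
    rw [show 1 + i = i + 1 from Nat.add_comm 1 i, Dlt_succ]
    push_cast; ring
  have h2 : ∑ k ∈ Finset.Icc (m+1) n, (k : ℝ) * Dlt α k
      = ∑ i ∈ range (n-m), ((m:ℝ)+(i:ℝ)+1) * (aa α (m+i) - aa α (m+i+1)) := by
    rw [← Finset.Ico_add_one_right_eq_Icc, Finset.sum_Ico_eq_sum_range,
      show n + 1 - (m + 1) = n - m from by omega]
    refine Finset.sum_congr rfl fun i _ => ?_
    rw [show m + 1 + i = (m + i) + 1 from by ring, Dlt_succ]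
    push_cast; ring
  have h3 : (∑' k : ℕ, Dlt α (n + 1 + k)) = aa α n := tsum_tail hα n
  have hnm : ((m:ℝ) + ((n - m : ℕ):ℝ)) = (n:ℝ) := by
    rw [← Nat.cast_add]; congr 1; omega
  have hmn' : m + (n - m) = n := by omega
  rw [phi, h1, h2, h3, S1, S2, hnm, hmn']
  ring

lemma natCast_tendsto : Tendsto (fun m : ℕ => (m:ℝ)) atTop atTop :=
  tendsto_natCast_atTop_atTop

lemma lim_rpow_atTop {p : ℝ} (hp : 0 < p) :
    Tendsto (fun m : ℕ => (m:ℝ)^p) atTop atTop :=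
  (tendsto_rpow_atTop hp).comp natCast_tendsto

lemma lim_div0 {p : ℝ} (hp : 0 < p) (K : ℝ) :
    Tendsto (fun m : ℕ => K / (m:ℝ)^p) atTop (𝓝 0) := by
  simpa [div_eq_mul_inv] using (lim_rpow_atTop hp).inv_tendsto_atTop.const_mul K

lemma lim_ratio (d p : ℝ) :
    Tendsto (fun m : ℕ => ((m:ℝ)+d)^p / (m:ℝ)^p) atTop (𝓝 1) := by
  have h1 : Tendsto (fun m : ℕ => 1 + d / (m:ℝ)) atTop (𝓝 1) := by
    simpa using (tendsto_const_nhds (x := (1:ℝ))).add (lim_div0 (p := 1) one_pos d |>.congr (by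
      intro m; rw [Real.rpow_one]))
  have h2 : Tendsto (fun m : ℕ => (1 + d / (m:ℝ))^p) atTop (𝓝 1) := by
    simpa using h1.rpow_const (Or.inl one_ne_zero)
  refine h2.congr' ?_
  filter_upwards [eventually_ge_atTop (max 1 ⌈-d⌉₊)] with m hm
  have hm1 : (1:ℕ) ≤ m := le_trans (le_max_left _ _) hm
  have hmR : (1:ℝ) ≤ (m:ℝ) := by exact_mod_cast hm1
  have hmd : 0 ≤ (m:ℝ) + d := by
    have : (⌈-d⌉₊ : ℝ) ≤ (m:ℝ) := by exact_mod_cast le_trans (le_max_right _ _) hm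
    have h' := Nat.le_ceil (-d)
    linarith
  have hm0 : (0:ℝ) < (m:ℝ) := by linarith
  rw [show (1:ℝ) + d / m = ((m:ℝ)+d)/m from by field_simp, Real.div_rpow hmd hm0.le]

lemma P1 (hα : 1 < α) (hα2 : α < 2) :
    Tendsto (fun m : ℕ => (∑ i ∈ range m, (2*(i:ℝ)+1) * aa α i) / (m:ℝ)^(2-α))
      atTop (𝓝 (2/(2-α))) := by
  set c := (2:ℝ)^(1/α) with hcdef
  have hc0 : (0:ℝ) < c := c_pos
  have hβ : (0:ℝ) < 2 - α := by linarith
  have hα1 : (0:ℝ) < α - 1 := by linarith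
  set S : ℕ → ℝ := fun m => ∑ i ∈ range m, ((i:ℝ)+c)^(1-α) with hS
  set R : ℕ → ℝ := fun m => ∑ i ∈ range m, ((i:ℝ)+c)^(-α) with hR
  have hU : ∀ m, (∑ i ∈ range m, (2*(i:ℝ)+1) * aa α i) = 2 * S m + (1-2*c) * R m := by
    intro m
    simp only [hS, hR, Finset.mul_sum, ← Finset.sum_add_distrib]
    refine Finset.sum_congr rfl fun i _ => ?_
    have hx : (0:ℝ) < (i:ℝ)+c := by positivity
    have e1 : ((i:ℝ)+c)^(1-α) = ((i:ℝ)+c) * ((i:ℝ)+c)^(-α) := by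
      rw [show (1:ℝ)-α = 1 + (-α) from by ring, Real.rpow_add hx, Real.rpow_one]
    rw [aa, ← hcdef, e1]; ring
  -- limit of S/m^p
  have hSlim : Tendsto (fun m : ℕ => S m / (m:ℝ)^(2-α)) atTop (𝓝 (1/(2-α))) := by
    have hlo : Tendsto (fun m : ℕ =>
        ((((m:ℝ)+c)^(2-α) - c^(2-α)) / (2-α)) / (m:ℝ)^(2-α)) atTop (𝓝 (1/(2-α))) := by
      have h1 := (lim_ratio c (2-α)).div_const (2-α)
      have h2 := lim_div0 hβ (c^(2-α)/(2-α))
      have h3 := h1.sub h2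
      rw [sub_zero] at h3
      exact h3.congr (fun m => by ring)
    have hhi : Tendsto (fun m : ℕ =>
        (((2-α) * c^(1-α) + ((m:ℝ)+c)^(2-α)) / (2-α)) / (m:ℝ)^(2-α)) atTop (𝓝 (1/(2-α))) := by
      have h1 := (lim_ratio c (2-α)).div_const (2-α)
      have h2 := lim_div0 hβ ((2-α) * c^(1-α)/(2-α))
      have h3 := h2.add h1
      rw [zero_add] at h3
      exact h3.congr (fun m => by ring)
    refine tendsto_of_tendsto_of_tendsto_of_le_of_le' hlo hhi ?_ ?_
    · filter_upwards [eventually_ge_atTop 1] with m hm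
      have hM : (0:ℝ) < (m:ℝ)^(2-α) := Real.rpow_pos_of_pos (by exact_mod_cast hm) _
      have hb := (sumP hα hα2 m hc0).2
      have h4 : (((m:ℝ)+c)^(2-α) - c^(2-α)) / (2-α) ≤ S m := by
        rw [div_le_iff₀ hβ]; linarith [hb]
      exact (div_le_div_iff_of_pos_right hM).mpr h4
    · filter_upwards [eventually_ge_atTop 1] with m hm
      have hM : (0:ℝ) < (m:ℝ)^(2-α) := Real.rpow_pos_of_pos (by exact_mod_cast hm) _
      obtain ⟨k, rfl⟩ : ∃ k, m = k + 1 := ⟨m - 1, by omega⟩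
      have hsplit : S (k+1) = (∑ i ∈ range k, ((i:ℝ)+1+c)^(1-α)) + c^(1-α) := by
        show ∑ i ∈ range (k+1), ((i:ℝ)+c)^(1-α) = _
        rw [Finset.sum_range_succ']
        push_cast
        norm_num
      have hb := (sumP hα hα2 k hc0).1
      have hk : ((k:ℝ)+c)^(2-α) ≤ (((k+1:ℕ):ℝ)+c)^(2-α) := by
        apply Real.rpow_le_rpow (by positivity) (by push_cast; linarith) hβ.le
      have h4 : S (k+1) ≤ ((2-α) * c^(1-α) + (((k+1:ℕ):ℝ)+c)^(2-α)) / (2-α) := by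
        rw [le_div_iff₀ hβ, hsplit]
        have hcp : (0:ℝ) < c^(2-α) := Real.rpow_pos_of_pos hc0 _
        nlinarith [hb, hk, hcp]
      exact (div_le_div_iff_of_pos_right hM).mpr h4
  -- limit of R-part
  have hB : ∀ m : ℕ, 1 ≤ m → (0 ≤ R m ∧ R m ≤ c^(-α) + c^(1-α)/(α-1)) := by
    intro m hm
    obtain ⟨k, rfl⟩ : ∃ k, m = k + 1 := ⟨m - 1, by omega⟩
    constructor
    · apply Finset.sum_nonneg
      intro i _
      positivity
    · have hsplit : R (k+1) = (∑ i ∈ range k, ((i:ℝ)+1+c)^(-α)) + c^(-α) := by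
        show ∑ i ∈ range (k+1), ((i:ℝ)+c)^(-α) = _
        rw [Finset.sum_range_succ']
        push_cast
        norm_num
      have hb := (sumQ hα k hc0).1
      have hpos : (0:ℝ) ≤ ((k:ℝ)+c)^(1-α) := Real.rpow_nonneg (by positivity) _
      have h4 : (∑ i ∈ range k, ((i:ℝ)+1+c)^(-α)) ≤ c^(1-α)/(α-1) := by
        rw [le_div_iff₀ hα1]
        nlinarith [hb, hpos]
      rw [hsplit]; linarith
  have hRlim : Tendsto (fun m : ℕ => (1-2*c) * R m / (m:ℝ)^(2-α)) atTop (𝓝 0) := by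
    apply squeeze_zero_norm' (a := fun m : ℕ => (|1-2*c| * (c^(-α) + c^(1-α)/(α-1))) / (m:ℝ)^(2-α))
    · filter_upwards [eventually_ge_atTop 1] with m hm
      have hM : (0:ℝ) < (m:ℝ)^(2-α) := Real.rpow_pos_of_pos (by exact_mod_cast hm) _
      obtain ⟨hR0, hRB⟩ := hB m hm
      rw [Real.norm_eq_abs, abs_div, abs_of_pos hM, abs_mul, abs_of_nonneg hR0]
      gcongr
    · exact lim_div0 hβ _
  have hmain := ((hSlim.const_mul 2).add hRlim)
  have : (2:ℝ) * (1/(2-α)) + 0 = 2/(2-α) := by ring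
  rw [this] at hmain
  refine hmain.congr fun m => ?_
  rw [hU m]; ring

lemma P2 (hα : 1 < α) (hα2 : α < 2) (n : ℕ → ℕ) (hmn : ∀ m, m ≤ n m)
    (hgrow : Tendsto (fun m : ℕ => ((n m : ℝ))/(m:ℝ)) atTop atTop) :
    Tendsto (fun m : ℕ => (m:ℝ) * (∑ i ∈ range (n m - m), aa α (m+i)) / (m:ℝ)^(2-α))
      atTop (𝓝 (1/(α-1))) := by
  set c := (2:ℝ)^(1/α) with hcdef
  have hc0 : (0:ℝ) < c := c_pos
  have hα1 : (0:ℝ) < α - 1 := by linarith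
  set T : ℕ → ℝ := fun m => ∑ i ∈ range (n m - m), aa α (m+i) with hT
  -- rewrite terms
  have hTerm : ∀ m i : ℕ, aa α (m+i) = ((i:ℝ) + ((m:ℝ)+c))^(-α) := by
    intro m i; rw [aa, ← hcdef]; push_cast; ring_nf
  have hNc : ∀ m : ℕ, (((n m - m : ℕ):ℝ) + ((m:ℝ)+c)) = (n m : ℝ) + c := by
    intro m
    have : ((n m - m : ℕ):ℝ) = (n m : ℝ) - (m:ℝ) := by
      rw [Nat.cast_sub (hmn m)]
    rw [this]; ring
  -- lower bound for T
  have hTlb : ∀ m : ℕ, (((m:ℝ)+c)^(1-α) - ((n m:ℝ)+c)^(1-α))/(α-1) ≤ T m := by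
    intro m
    have hb := (sumQ hα (n m - m) (t := (m:ℝ)+c) (by positivity)).2
    rw [hNc m] at hb
    have he : T m = ∑ i ∈ range (n m - m), ((i:ℝ) + ((m:ℝ)+c))^(-α) :=
      Finset.sum_congr rfl fun i _ => hTerm m i
    rw [he, div_le_iff₀ hα1]
    linarith
  -- upper bound for T
  have hTub : ∀ m : ℕ, T m ≤ ((m:ℝ)+c)^(-α) + ((m:ℝ)+c)^(1-α)/(α-1) := by
    intro m
    have he : T m = ∑ i ∈ range (n m - m), ((i:ℝ) + ((m:ℝ)+c))^(-α) :=
      Finset.sum_congr rfl fun i _ => hTerm m i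
    rcases Nat.eq_zero_or_pos (n m - m) with h0 | hpos
    · rw [he, h0]
      simp only [Finset.range_zero, Finset.sum_empty]
      positivity
    · obtain ⟨k, hk⟩ : ∃ k, n m - m = k + 1 := ⟨n m - m - 1, by omega⟩
      rw [he, hk, Finset.sum_range_succ']
      have hb := (sumQ hα k (t := (m:ℝ)+c) (by positivity)).1
      have hsum : ∑ i ∈ range k, (((i+1:ℕ):ℝ) + ((m:ℝ)+c))^(-α)
          = ∑ i ∈ range k, ((i:ℝ) + 1 + ((m:ℝ)+c))^(-α) := by
        refine Finset.sum_congr rfl fun i _ => ?_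
        push_cast; ring_nf
      have hpos2 : (0:ℝ) ≤ ((k:ℝ)+((m:ℝ)+c))^(1-α) := Real.rpow_nonneg (by positivity) _
      have h5 : ∑ i ∈ range k, ((i:ℝ) + 1 + ((m:ℝ)+c))^(-α) ≤ ((m:ℝ)+c)^(1-α)/(α-1) := by
        rw [le_div_iff₀ hα1]
        nlinarith [hb, hpos2]
      have hz : ((0:ℕ):ℝ) + ((m:ℝ)+c) = (m:ℝ)+c := by push_cast; ring
      rw [hsum, hz]
      linarith
  -- nonnegativity of T
  have hT0 : ∀ m : ℕ, 0 ≤ T m :=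
    fun m => Finset.sum_nonneg fun i _ => aa_nonneg _
  -- growth of (n m + c)/m
  have hgrow' : Tendsto (fun m : ℕ => ((n m : ℝ)+c)/(m:ℝ)) atTop atTop := by
    refine tendsto_atTop_mono' atTop ?_ hgrow
    filter_upwards [eventually_ge_atTop 1] with m hm
    have hm0 : (0:ℝ) < (m:ℝ) := by exact_mod_cast hm
    have h8 : (n m : ℝ)/(m:ℝ) ≤ ((n m : ℝ)+c)/(m:ℝ) := by gcongr <;> linarith
    exact h8
  -- limit building blocks
  have hterm1 : Tendsto (fun m : ℕ => ((m:ℝ)+c)^(1-α) / (m:ℝ)^(1-α)) atTop (𝓝 1) :=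
    lim_ratio c (1-α)
  have hterm2 : Tendsto (fun m : ℕ => (((n m:ℝ)+c)/(m:ℝ))^(1-α)) atTop (𝓝 0) := by
    have h9 := (tendsto_rpow_neg_atTop hα1).comp hgrow'
    simpa [Function.comp_def, show -(α-1) = 1-α from by ring] using h9
  have hlo : Tendsto (fun m : ℕ =>
      (((m:ℝ)+c)^(1-α)/(m:ℝ)^(1-α) - (((n m:ℝ)+c)/(m:ℝ))^(1-α)) / (α-1))
      atTop (𝓝 (1/(α-1))) := by
    have h9 := (hterm1.sub hterm2).div_const (α-1)
    simpa using h9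
  have hhi : Tendsto (fun m : ℕ =>
      1/(m:ℝ) + (((m:ℝ)+c)^(1-α)/(m:ℝ)^(1-α))/(α-1)) atTop (𝓝 (1/(α-1))) := by
    have h1 : Tendsto (fun m : ℕ => 1/(m:ℝ)) atTop (𝓝 0) :=
      tendsto_one_div_atTop_nhds_zero_nat
    have h9 := h1.add (hterm1.div_const (α-1))
    simpa using h9
  refine tendsto_of_tendsto_of_tendsto_of_le_of_le' hlo hhi ?_ ?_
  · filter_upwards [eventually_ge_atTop 1] with m hm
    have hm0 : (0:ℝ) < (m:ℝ) := by exact_mod_cast hm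
    have hM : (0:ℝ) < (m:ℝ)^(2-α) := Real.rpow_pos_of_pos hm0 _
    have hprod : (m:ℝ)^(α-1) * (m:ℝ)^(2-α) = (m:ℝ) := by
      rw [← Real.rpow_add hm0, show α-1+(2-α) = (1:ℝ) from by ring, Real.rpow_one]
    have hFm : (m:ℝ) * T m / (m:ℝ)^(2-α) = (m:ℝ)^(α-1) * T m := by
      rw [div_eq_iff (ne_of_gt hM)]
      linear_combination (-(T m)) * hprod
    have hpow : (m:ℝ)^(α-1) = ((m:ℝ)^(1-α))⁻¹ := by
      rw [show α-(1:ℝ) = -(1-α) from by ring, Real.rpow_neg hm0.le]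
    have h1 : ((m:ℝ)+c)^(1-α)/(m:ℝ)^(1-α) = (m:ℝ)^(α-1) * ((m:ℝ)+c)^(1-α) := by
      rw [hpow]; ring
    have h2 : (((n m:ℝ)+c)/(m:ℝ))^(1-α) = (m:ℝ)^(α-1) * ((n m:ℝ)+c)^(1-α) := by
      rw [Real.div_rpow (by positivity) hm0.le, hpow]; ring
    rw [hFm, h1, h2]
    calc ((m:ℝ)^(α-1) * ((m:ℝ)+c)^(1-α) - (m:ℝ)^(α-1) * ((n m:ℝ)+c)^(1-α)) / (α-1)
        = (m:ℝ)^(α-1) * ((((m:ℝ)+c)^(1-α) - ((n m:ℝ)+c)^(1-α))/(α-1)) := by ring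
    _ ≤ (m:ℝ)^(α-1) * T m :=
        mul_le_mul_of_nonneg_left (hTlb m) (Real.rpow_nonneg hm0.le _)
  · filter_upwards [eventually_ge_atTop 1] with m hm
    have hm0 : (0:ℝ) < (m:ℝ) := by exact_mod_cast hm
    have hM : (0:ℝ) < (m:ℝ)^(2-α) := Real.rpow_pos_of_pos hm0 _
    have hprod : (m:ℝ)^(α-1) * (m:ℝ)^(2-α) = (m:ℝ) := by
      rw [← Real.rpow_add hm0, show α-1+(2-α) = (1:ℝ) from by ring, Real.rpow_one]
    have hFm : (m:ℝ) * T m / (m:ℝ)^(2-α) = (m:ℝ)^(α-1) * T m := by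
      rw [div_eq_iff (ne_of_gt hM)]
      linear_combination (-(T m)) * hprod
    have hpow : (m:ℝ)^(α-1) = ((m:ℝ)^(1-α))⁻¹ := by
      rw [show α-(1:ℝ) = -(1-α) from by ring, Real.rpow_neg hm0.le]
    have h1 : ((m:ℝ)+c)^(1-α)/(m:ℝ)^(1-α) = (m:ℝ)^(α-1) * ((m:ℝ)+c)^(1-α) := by
      rw [hpow]; ring
    have hr : (0:ℝ) ≤ (m:ℝ)^(α-1) := Real.rpow_nonneg hm0.le _
    have h3 : (m:ℝ)^(α-1) * ((m:ℝ)+c)^(-α) ≤ 1/(m:ℝ) := by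
      have h4 : ((m:ℝ)+c)^(-α) ≤ (m:ℝ)^(-α) :=
        rpow_anti hm0 (by linarith) (by linarith)
      have h5 : (m:ℝ)^(α-1) * (m:ℝ)^(-α) = 1/(m:ℝ) := by
        rw [← Real.rpow_add hm0, show α-1 + -α = -1 from by ring, Real.rpow_neg_one]
        exact one_div _ |>.symm
      calc (m:ℝ)^(α-1) * ((m:ℝ)+c)^(-α) ≤ (m:ℝ)^(α-1) * (m:ℝ)^(-α) :=
            mul_le_mul_of_nonneg_left h4 hr
      _ = 1/(m:ℝ) := h5
    rw [hFm]
    calc (m:ℝ)^(α-1) * T m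
        ≤ (m:ℝ)^(α-1) * (((m:ℝ)+c)^(-α) + ((m:ℝ)+c)^(1-α)/(α-1)) :=
          mul_le_mul_of_nonneg_left (hTub m) hr
    _ = (m:ℝ)^(α-1) * ((m:ℝ)+c)^(-α) + ((m:ℝ)^(α-1) * ((m:ℝ)+c)^(1-α))/(α-1) := by ring
    _ ≤ 1/(m:ℝ) + (((m:ℝ)+c)^(1-α)/(m:ℝ)^(1-α))/(α-1) := by
        rw [h1]
        gcongr

theorem stmt_18 (α ℓ q : ℝ) (hℓ : 0 < ℓ) (hq : 1 < q) (hα : 1 < α) (hα2 : α < 2) :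
    Tendsto
      (fun m : ℕ => phi α ⌊(m : ℝ) + ℓ * (m : ℝ) ^ q⌋₊ m /
        ((2 * α / ((2 - α) * (α - 1))) * (m : ℝ) ^ ((2 : ℝ) - α)))
      atTop (𝓝 1) := by
  set n : ℕ → ℕ := fun m => ⌊(m : ℝ) + ℓ * (m : ℝ) ^ q⌋₊ with hn
  have hα0 : (0:ℝ) < α := by linarith
  have hβ : (0:ℝ) < 2 - α := by linarith
  have hα1 : (0:ℝ) < α - 1 := by linarith
  have hmn : ∀ m, m ≤ n m := by
    intro m
    apply Nat.le_floor
    have : (0:ℝ) ≤ ℓ * (m:ℝ)^q := by positivity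
    linarith
  have hgrow : Tendsto (fun m : ℕ => ((n m : ℝ))/(m:ℝ)) atTop atTop := by
    have hbase : Tendsto (fun m : ℕ => ℓ * (m:ℝ)^(q-1)) atTop atTop :=
      (lim_rpow_atTop (by linarith : (0:ℝ) < q - 1)).const_mul_atTop hℓ
    refine tendsto_atTop_mono' atTop ?_ hbase
    filter_upwards [eventually_ge_atTop 1] with m hm
    have hm0 : (0:ℝ) < (m:ℝ) := by exact_mod_cast hm
    have hfl : (m:ℝ) + ℓ * (m:ℝ)^q < (n m : ℝ) + 1 := Nat.lt_floor_add_one _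
    have hm1 : (1:ℝ) ≤ (m:ℝ) := by exact_mod_cast hm
    have h1 : ℓ * (m:ℝ)^q ≤ (n m : ℝ) := by nlinarith [hfl]
    have h2 : (m:ℝ)^(q-1) = (m:ℝ)^q / (m:ℝ) := by
      rw [Real.rpow_sub hm0, Real.rpow_one]
    rw [h2, mul_div_assoc']
    gcongr
  have key : Tendsto (fun m : ℕ => phi α (n m) m / (m:ℝ)^((2:ℝ)-α)) atTop
      (𝓝 (2 * (2/(2-α)) + 2 * (1/(α-1)))) := by
    have h := ((P1 hα hα2).const_mul 2).add ((P2 hα hα2 n hmn hgrow).const_mul 2)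
    refine h.congr fun m => ?_
    rw [phi_eq hα0 (hmn m)]
    ring
  have hC : (2 * (2/(2-α)) + 2 * (1/(α-1))) / (2 * α / ((2 - α) * (α - 1))) = 1 := by
    rw [div_eq_one_iff_eq]
    · field_simp
      ring
    · intro h
      have h2 : 2 * α ≠ 0 := by positivity
      have h3 : ((2-α)*(α-1)) ≠ 0 := by positivity
      exact absurd h (div_ne_zero h2 h3)
  have hfinal := key.div_const (2 * α / ((2 - α) * (α - 1)))
  rw [hC] at hfinal
  refine hfinal.congr fun m => ?_
  ring
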